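/- Let m ≥ 1, let J be the 2m×2m block matrix [[0, -I_m],[I_m, 0]], and let the group Σ of order two act on U(2m) by σ_H(u) = J·ū·J⁻¹ (ū the entrywise complex conjugate); the fixed subgroup U(2m)^{Σ} is the compact symplectic group Sp(m) = {u ∈ U(2m) : u·J·uᵀ = J}. Let Γ be a group equipped with an action of Σ. Then the assignment ρ ↦ ρ̂ induces a bijection from the set of Σ-equivariant group homomorphisms ρ : Γ → U(2m) modulo conjugation by elements of Sp(m), onto the set of homomorphisms of Σ-augmentations χ : Γ⋊Σ → U(2m)⋊Σ modulo conjugation by elements (u,1) with u ∈ U(2m). -/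

import Mathlib

/-- The standard symplectic matrix `J = [[0, -I_m],[I_m, 0]]`. -/
noncomputable def Jmat (m : ℕ) : Matrix (Fin m ⊕ Fin m) (Fin m ⊕ Fin m) ℂ :=
  Matrix.fromBlocks 0 (-1) 1 0

/-- The set of Σ-equivariant group homomorphisms `ρ : Γ → G`. -/
def EquivHom {S Γ G : Type*} [Group S] [Group Γ] [Group G]
    (φΓ : S →* MulAut Γ) (φG : S →* MulAut G) :=
  {ρ : Γ →* G // ∀ (s : S) (γ : Γ), ρ (φΓ s γ) = φG s (ρ γ)}

/-- The set of homomorphisms of Σ-augmentations `χ : Γ⋊Σ → G⋊Σ`. -/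
def AugHom {S Γ G : Type*} [Group S] [Group Γ] [Group G]
    (φΓ : S →* MulAut Γ) (φG : S →* MulAut G) :=
  {χ : Γ ⋊[φΓ] S →* G ⋊[φG] S // ∀ x : Γ ⋊[φΓ] S, (χ x).right = x.right}

/-- The assignment `ρ ↦ ρ̂`, `(γ, σ) ↦ (ρ(γ), σ)`. -/
def hatFun {S Γ G : Type*} [Group S] [Group Γ] [Group G]
    (φΓ : S →* MulAut Γ) (φG : S →* MulAut G) (ρ : EquivHom φΓ φG) : AugHom φΓ φG :=
  ⟨{ toFun := fun x => ⟨ρ.1 x.left, x.right⟩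
     map_one' := by ext <;> simp
     map_mul' := fun x y => by ext <;> simp [ρ.2] },
   fun x => rfl⟩


open Matrix

local notation "⟪" x ", " y "⟫" => @inner ℂ _ _ x y

lemma exists_unit_orth {ι : Type*} [Fintype ι] [DecidableEq ι] (k : ℕ)
    (hk : k < Fintype.card ι) (g : Fin k → (ι → ℂ)) :
    ∃ x : ι → ℂ, dotProduct (star x) x = 1 ∧ ∀ i, dotProduct (star (g i)) x = 0 := by
  classical
  let g' : Fin k → EuclideanSpace ℂ ι := fun i => (WithLp.equiv 2 _).symm (g i)
  have hW : Submodule.span ℂ (Set.range g') < ⊤ := by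
    apply span_lt_top_of_card_lt_finrank
    rw [finrank_euclideanSpace, Set.toFinset_card]
    exact lt_of_le_of_lt (Fintype.card_range_le g') (by simpa using hk)
  have hO : (Submodule.span ℂ (Set.range g'))ᗮ ≠ ⊥ := fun h =>
    hW.ne (Submodule.orthogonal_eq_bot_iff.mp h)
  obtain ⟨y, hy, hy0⟩ := Submodule.exists_mem_ne_zero_of_ne_bot hO
  set z : EuclideanSpace ℂ ι := (‖y‖ : ℂ)⁻¹ • y with hz
  have h1 : ⟪z, z⟫ = 1 := by
    rw [hz, inner_smul_left, inner_smul_right, inner_self_eq_norm_sq_to_K (𝕜 := ℂ)]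
    simp only [map_inv₀, Complex.conj_ofReal]
    have hn : (‖y‖ : ℂ) ≠ 0 := by simpa using norm_ne_zero_iff.mpr hy0
    field_simp
    rfl
  have h2 : ∀ i, ⟪g' i, z⟫ = 0 := by
    intro i
    have hmem : g' i ∈ Submodule.span ℂ (Set.range g') :=
      Submodule.subset_span ⟨i, rfl⟩
    rw [hz, inner_smul_right, (Submodule.mem_orthogonal _ _).mp hy _ hmem, mul_zero]
  refine ⟨(WithLp.equiv 2 _) z, ?_, ?_⟩
  · rw [dotProduct_comm]
    exact h1
  · intro i
    rw [dotProduct_comm]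
    exact h2 i


section core

lemma ip_conj {m : ℕ} (x y : (Fin m ⊕ Fin m) → ℂ) :
    star x ⬝ᵥ y = starRingEnd ℂ (star y ⬝ᵥ x) := by
  simp [dotProduct, map_sum, mul_comm]

lemma hAAconj {m : ℕ} {A : Matrix (Fin m ⊕ Fin m) (Fin m ⊕ Fin m) ℂ}
    (hA : A ∈ Matrix.unitaryGroup (Fin m ⊕ Fin m) ℂ) (hskew : Aᵀ = -A) :
    A * A.map (starRingEnd ℂ) = -1 := by
  have h1 : A * star A = 1 := hA.2
  have h2 : star A = -(A.map (starRingEnd ℂ)) := by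
    rw [Matrix.star_eq_conjTranspose, Matrix.conjTranspose, hskew]
    ext p q
    simp
  rw [h2, mul_neg] at h1
  exact neg_eq_iff_eq_neg.mp h1

lemma ip_theta_theta {m : ℕ} {A : Matrix (Fin m ⊕ Fin m) (Fin m ⊕ Fin m) ℂ}
    (hA : A ∈ Matrix.unitaryGroup (Fin m ⊕ Fin m) ℂ) (x y : (Fin m ⊕ Fin m) → ℂ) :
    star (A *ᵥ star x) ⬝ᵥ (A *ᵥ star y) = star y ⬝ᵥ x := by
  have h1 : star A * A = 1 := hA.1
  rw [Matrix.star_mulVec, star_star, Matrix.dotProduct_mulVec, Matrix.vecMul_vecMul,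
    ← Matrix.star_eq_conjTranspose, h1, Matrix.vecMul_one]
  simp [dotProduct, mul_comm]

lemma ip_theta_skew {m : ℕ} {A : Matrix (Fin m ⊕ Fin m) (Fin m ⊕ Fin m) ℂ}
    (hskew : Aᵀ = -A) (x y : (Fin m ⊕ Fin m) → ℂ) :
    star x ⬝ᵥ (A *ᵥ star y) = -(star y ⬝ᵥ (A *ᵥ star x)) := by
  rw [Matrix.dotProduct_mulVec, dotProduct_comm, ← Matrix.mulVec_transpose, hskew,
    Matrix.neg_mulVec, dotProduct_neg]

lemma exists_iso_family {m : ℕ} {A : Matrix (Fin m ⊕ Fin m) (Fin m ⊕ Fin m) ℂ}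
    (hA : A ∈ Matrix.unitaryGroup (Fin m ⊕ Fin m) ℂ) (hskew : Aᵀ = -A) :
    ∀ k, k ≤ m → ∃ e : Fin k → ((Fin m ⊕ Fin m) → ℂ),
    (∀ i j, star (e i) ⬝ᵥ e j = if i = j then 1 else 0) ∧
    (∀ i j, star (e i) ⬝ᵥ (A *ᵥ star (e j)) = 0) := by
  intro k
  induction k with
  | zero => exact fun _ => ⟨Fin.elim0, fun i => i.elim0, fun i => i.elim0⟩
  | succ k ih =>
    intro hk1
    obtain ⟨e, he1, he2⟩ := ih (le_of_lt hk1)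
    set g : Fin (k + k) → ((Fin m ⊕ Fin m) → ℂ) :=
      Fin.append e (fun i => A *ᵥ star (e i)) with hg
    have hcard : k + k < Fintype.card (Fin m ⊕ Fin m) := by
      simp only [Fintype.card_sum, Fintype.card_fin]
      omega
    obtain ⟨x, hx1, hx2⟩ := exists_unit_orth (k + k) hcard g
    have hxe : ∀ i, star (e i) ⬝ᵥ x = 0 := by
      intro i
      have := hx2 (Fin.castAdd k i)
      rwa [hg, Fin.append_left] at this
    have hxθ : ∀ i, star (A *ᵥ star (e i)) ⬝ᵥ x = 0 := by
      intro i
      have := hx2 (Fin.natAdd k i)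
      rwa [hg, Fin.append_right] at this
    refine ⟨Fin.snoc e x, ?_, ?_⟩
    · intro i j
      refine Fin.lastCases ?_ (fun i' => ?_) i <;>
        refine Fin.lastCases ?_ (fun j' => ?_) j
      · simp [Fin.snoc_last, hx1]
      · rw [Fin.snoc_last, Fin.snoc_castSucc, ip_conj, hxe j',
          if_neg (Fin.castSucc_lt_last j').ne']
        simp
      · rw [Fin.snoc_last, Fin.snoc_castSucc, hxe i',
          if_neg (Fin.castSucc_lt_last i').ne]
      · rw [Fin.snoc_castSucc, Fin.snoc_castSucc, he1 i' j']
        simp [Fin.castSucc_inj]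
    · intro i j
      refine Fin.lastCases ?_ (fun i' => ?_) i <;>
        refine Fin.lastCases ?_ (fun j' => ?_) j
      · rw [Fin.snoc_last]
        have h := ip_theta_skew hskew x x
        linear_combination h / 2
      · rw [Fin.snoc_last, Fin.snoc_castSucc, ip_conj, hxθ j']
        simp
      · rw [Fin.snoc_last, Fin.snoc_castSucc, ip_theta_skew hskew, ip_conj, hxθ i']
        simp
      · rw [Fin.snoc_castSucc, Fin.snoc_castSucc]
        exact he2 i' j'

end core

lemma skew_takagi {m : ℕ} {A : Matrix (Fin m ⊕ Fin m) (Fin m ⊕ Fin m) ℂ}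
    (hA : A ∈ Matrix.unitaryGroup (Fin m ⊕ Fin m) ℂ) (hskew : Aᵀ = -A) :
    ∃ v ∈ Matrix.unitaryGroup (Fin m ⊕ Fin m) ℂ, v * Jmat m * vᵀ = A := by
  classical
  obtain ⟨e, he1, he2⟩ := exists_iso_family hA hskew m le_rfl
  set v : Matrix (Fin m ⊕ Fin m) (Fin m ⊕ Fin m) ℂ :=
    Matrix.of fun p q => Sum.elim (fun i => e i p) (fun i => (A *ᵥ star (e i)) p) q with hv
  have hip : ∀ q q', star (fun p => v p q) ⬝ᵥ (fun p => v p q') =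
      if q = q' then 1 else 0 := by
    rintro (i | i) (j | j)
    · simpa [hv] using he1 i j
    · simpa [hv] using he2 i j
    · have := ip_conj (A *ᵥ star (e i)) (e j)
      rw [show (star (fun p => v p (Sum.inr i)) ⬝ᵥ fun p => v p (Sum.inl j)) =
        star (A *ᵥ star (e i)) ⬝ᵥ (e j) from rfl, this, he2 j i]
      simp
    · have := ip_theta_theta hA (e i) (e j)
      rw [show (star (fun p => v p (Sum.inr i)) ⬝ᵥ fun p => v p (Sum.inr j)) =
        star (A *ᵥ star (e i)) ⬝ᵥ (A *ᵥ star (e j)) from rfl, this, he1 j i]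
      simp [eq_comm]
  have hunit : v ∈ Matrix.unitaryGroup (Fin m ⊕ Fin m) ℂ := by
    rw [Matrix.mem_unitaryGroup_iff']
    ext q q'
    have := hip q q'
    simpa [Matrix.mul_apply, Matrix.conjTranspose_apply, Matrix.one_apply,
      dotProduct] using this
  refine ⟨v, hunit, ?_⟩
  -- v * J = A * v.map conj
  have hvJ : v * Jmat m = A * v.map (starRingEnd ℂ) := by
    ext p q
    rcases q with j | j
    · rw [show (A * v.map (starRingEnd ℂ)) p (Sum.inl j) = (A *ᵥ star (e j)) p by
        simp [Matrix.mul_apply, Matrix.mulVec, dotProduct, hv]]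
      simp [Matrix.mul_apply, Jmat, Fintype.sum_sum_type, Matrix.one_apply, hv]
    · have hrhs : (A * v.map (starRingEnd ℂ)) p (Sum.inr j) =
          ((A * A.map (starRingEnd ℂ)) *ᵥ (e j)) p := by
        simp only [hv, Matrix.mul_apply, Matrix.of_apply, Sum.elim_inr, Matrix.mulVec,
          dotProduct, Pi.star_apply, Matrix.map_apply, map_sum,
          Finset.mul_sum, Finset.sum_mul]
        rw [Finset.sum_comm]
        refine Finset.sum_congr rfl fun b _ => Finset.sum_congr rfl fun a _ => ?_
        simp only [_root_.map_mul, RCLike.star_def, Complex.conj_conj]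
        ring
      rw [hrhs, hAAconj hA hskew]
      simp [Matrix.mul_apply, Jmat, Fintype.sum_sum_type, Matrix.one_apply, hv,
        Matrix.neg_mulVec, Matrix.mulVec, dotProduct, Finset.sum_ite_eq]
  -- v.map conj * vᵀ = 1
  have hc : v.map (starRingEnd ℂ) * vᵀ = 1 := by
    have h2 : v * star v = 1 := hunit.2
    have := congrArg (Matrix.map · (starRingEnd ℂ)) h2
    simp only [Matrix.map_mul] at this
    rw [show (star v).map (starRingEnd ℂ) = vᵀ by
        ext p q; simp [Matrix.star_eq_conjTranspose, Matrix.conjTranspose_apply],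
      Matrix.map_one (starRingEnd ℂ) (map_zero _) (map_one _)] at this
    exact this
  calc v * Jmat m * vᵀ = A * (v.map (starRingEnd ℂ) * vᵀ) := by rw [hvJ, mul_assoc]
    _ = A := by rw [hc, mul_one]

section Jlem
variable {m : ℕ}

lemma Jmat_mul_Jmat : Jmat m * Jmat m = -1 := by
  simp [Jmat, Matrix.fromBlocks_multiply, Matrix.fromBlocks_neg, ← Matrix.fromBlocks_one]

lemma Jmat_transpose : (Jmat m)ᵀ = -(Jmat m) := by
  simp [Jmat, Matrix.fromBlocks_transpose, Matrix.fromBlocks_neg]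

lemma Jmat_map_conj : (Jmat m).map (starRingEnd ℂ) = Jmat m := by
  ext p q
  rcases p with i | i <;> rcases q with j | j <;>
    simp [Jmat, Matrix.one_apply, apply_ite]

lemma Jmat_star : star (Jmat m) = -(Jmat m) := by
  rw [Matrix.star_eq_conjTranspose, Matrix.conjTranspose,
    show (Jmat m)ᵀ.map star = ((Jmat m).map (starRingEnd ℂ))ᵀ from rfl, Jmat_map_conj,
    Jmat_transpose]

lemma Jmat_mem : Jmat m ∈ Matrix.unitaryGroup (Fin m ⊕ Fin m) ℂ := by
  constructor <;>
    rw [Jmat_star] <;>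
    simp [Jmat_mul_Jmat]

lemma Jmat_inv : (Jmat m)⁻¹ = -(Jmat m) :=
  Matrix.inv_eq_right_inv (by rw [mul_neg, Jmat_mul_Jmat]; simp)

-- map conj lemmas for unitary g
lemma conj_star_eq_transpose (g : Matrix (Fin m ⊕ Fin m) (Fin m ⊕ Fin m) ℂ) :
    (star g).map (starRingEnd ℂ) = gᵀ := by
  ext p q
  simp [Matrix.star_eq_conjTranspose, Matrix.conjTranspose_apply]

lemma transpose_mul_conj_eq_one {g : Matrix (Fin m ⊕ Fin m) (Fin m ⊕ Fin m) ℂ}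
    (hg : g ∈ Matrix.unitaryGroup (Fin m ⊕ Fin m) ℂ) :
    gᵀ * g.map (starRingEnd ℂ) = 1 := by
  have := congrArg (Matrix.map · (starRingEnd ℂ)) hg.1
  simpa [Matrix.map_mul, conj_star_eq_transpose,
    Matrix.map_one (starRingEnd ℂ) (map_zero _) (map_one _)] using this

lemma conj_mul_transpose_eq_one {g : Matrix (Fin m ⊕ Fin m) (Fin m ⊕ Fin m) ℂ}
    (hg : g ∈ Matrix.unitaryGroup (Fin m ⊕ Fin m) ℂ) :
    g.map (starRingEnd ℂ) * gᵀ = 1 := by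
  have := congrArg (Matrix.map · (starRingEnd ℂ)) hg.2
  simpa [Matrix.map_mul, conj_star_eq_transpose,
    Matrix.map_one (starRingEnd ℂ) (map_zero _) (map_one _)] using this

/-- For unitary `g`: if `g J gᵀ = J` then `J ḡ J⁻¹ = g`. -/
lemma sp_fixed {g : Matrix (Fin m ⊕ Fin m) (Fin m ⊕ Fin m) ℂ}
    (hg : g ∈ Matrix.unitaryGroup (Fin m ⊕ Fin m) ℂ)
    (hsp : g * Jmat m * gᵀ = Jmat m) :
    Jmat m * g.map (starRingEnd ℂ) * (Jmat m)⁻¹ = g := by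
  have h1 : g * Jmat m = Jmat m * g.map (starRingEnd ℂ) := by
    calc g * Jmat m = g * Jmat m * (gᵀ * g.map (starRingEnd ℂ)) := by
          rw [transpose_mul_conj_eq_one hg, mul_one]
      _ = (g * Jmat m * gᵀ) * g.map (starRingEnd ℂ) := by noncomm_ring
      _ = Jmat m * g.map (starRingEnd ℂ) := by rw [hsp]
  rw [← h1, Jmat_inv, mul_neg, mul_assoc, Jmat_mul_Jmat]
  simp

/-- Converse: if `J ḡ J⁻¹ = g` then `g J gᵀ = J`. -/
lemma sp_of_fixed {g : Matrix (Fin m ⊕ Fin m) (Fin m ⊕ Fin m) ℂ}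
    (hg : g ∈ Matrix.unitaryGroup (Fin m ⊕ Fin m) ℂ)
    (hfix : Jmat m * g.map (starRingEnd ℂ) * (Jmat m)⁻¹ = g) :
    g * Jmat m * gᵀ = Jmat m := by
  have h1 : g * Jmat m = Jmat m * g.map (starRingEnd ℂ) := by
    conv_lhs => rw [← hfix, Jmat_inv]
    calc Jmat m * g.map (starRingEnd ℂ) * -Jmat m * Jmat m
        = Jmat m * g.map (starRingEnd ℂ) * -(Jmat m * Jmat m) := by noncomm_ring
      _ = Jmat m * g.map (starRingEnd ℂ) := by rw [Jmat_mul_Jmat]; simp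
  calc g * Jmat m * gᵀ = Jmat m * (g.map (starRingEnd ℂ) * gᵀ) := by
        rw [h1, mul_assoc]
    _ = Jmat m := by rw [conj_mul_transpose_eq_one hg, mul_one]

/-- Sp is closed under the operations needed: `star g` version. -/
lemma sp_star {g : Matrix (Fin m ⊕ Fin m) (Fin m ⊕ Fin m) ℂ}
    (hg : g ∈ Matrix.unitaryGroup (Fin m ⊕ Fin m) ℂ)
    (hsp : g * Jmat m * gᵀ = Jmat m) :
    star g * Jmat m * (star g)ᵀ = Jmat m := by
  have h2 : (star g)ᵀ = g.map (starRingEnd ℂ) := by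
    ext p q
    simp [Matrix.star_eq_conjTranspose, Matrix.conjTranspose_apply]
  rw [h2]
  calc star g * Jmat m * g.map (starRingEnd ℂ)
      = star g * (g * Jmat m * gᵀ) * g.map (starRingEnd ℂ) := by rw [hsp]
    _ = (star g * g) * Jmat m * (gᵀ * g.map (starRingEnd ℂ)) := by noncomm_ring
    _ = Jmat m := by rw [hg.1, transpose_mul_conj_eq_one hg, one_mul, mul_one]

end Jlem

-- auxiliary semidirect product conjugation lemma
lemma conj_inl_eq {N G : Type*} [Group N] [Group G] (φ : G →* MulAut N) (u : N) (y : N ⋊[φ] G) :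
    (SemidirectProduct.inl u * y * (SemidirectProduct.inl u)⁻¹ : N ⋊[φ] G) =
      ⟨u * y.left * φ y.right u⁻¹, y.right⟩ := by
  rw [show ((SemidirectProduct.inl u)⁻¹ : N ⋊[φ] G) = SemidirectProduct.inl u⁻¹ from
    (map_inv _ u).symm]
  ext <;> simp [SemidirectProduct.mul_left, SemidirectProduct.mul_right, mul_assoc]

lemma hat_apply {S Γ G : Type*} [Group S] [Group Γ] [Group G]
    (φΓ : S →* MulAut Γ) (φG : S →* MulAut G) (ρ : EquivHom φΓ φG) (x : Γ ⋊[φΓ] S) :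
    (hatFun φΓ φG ρ).1 x = ⟨ρ.1 x.left, x.right⟩ := rfl

set_option maxHeartbeats 2000000 in
/-- Let `Σ` be a group of order two acting on a group `Γ`, and acting on `U(2m)` by
`σ_H(u) = J·ū·J⁻¹` (with fixed subgroup the compact symplectic group
`Sp(m) = {u ∈ U(2m) : u·J·uᵀ = J}`). Then `ρ ↦ ρ̂` induces a bijection from Σ-equivariant
homomorphisms `Γ → U(2m)` modulo conjugation by elements of `Sp(m)` onto homomorphisms of
Σ-augmentations `Γ⋊Σ → U(2m)⋊Σ` modulo conjugation by elements `(u, 1)` with `u ∈ U(2m)`. -/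
theorem stmt9 (m : ℕ) (hm : 1 ≤ m) {S Γ : Type*} [Group S] [Group Γ]
    (hS : Nat.card S = 2)
    (φΓ : S →* MulAut Γ)
    (φU : S →* MulAut (Matrix.unitaryGroup (Fin m ⊕ Fin m) ℂ))
    (hφU : ∀ s : S, s ≠ 1 → ∀ u : Matrix.unitaryGroup (Fin m ⊕ Fin m) ℂ,
      ((φU s u : Matrix (Fin m ⊕ Fin m) (Fin m ⊕ Fin m) ℂ))
        = Jmat m * (u : Matrix (Fin m ⊕ Fin m) (Fin m ⊕ Fin m) ℂ).map (starRingEnd ℂ)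
            * (Jmat m)⁻¹) :
    ∃ e : Quot (fun ρ₁ ρ₂ : EquivHom φΓ φU =>
            ∃ g : Matrix.unitaryGroup (Fin m ⊕ Fin m) ℂ,
              ((g : Matrix (Fin m ⊕ Fin m) (Fin m ⊕ Fin m) ℂ) * Jmat m
                  * (g : Matrix (Fin m ⊕ Fin m) (Fin m ⊕ Fin m) ℂ).transpose = Jmat m) ∧
              ∀ γ : Γ, ρ₂.1 γ = g * ρ₁.1 γ * g⁻¹)
          ≃ Quot (fun χ₁ χ₂ : AugHom φΓ φU =>
            ∃ u : Matrix.unitaryGroup (Fin m ⊕ Fin m) ℂ, ∀ x : Γ ⋊[φΓ] S,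
              χ₂.1 x = SemidirectProduct.inl u * χ₁.1 x * (SemidirectProduct.inl u)⁻¹),
      ∀ ρ : EquivHom φΓ φU, e (Quot.mk _ ρ) = Quot.mk _ (hatFun φΓ φU ρ) := by
  classical
  -- notation
  set rE : EquivHom φΓ φU → EquivHom φΓ φU → Prop := fun ρ₁ ρ₂ =>
    ∃ g : Matrix.unitaryGroup (Fin m ⊕ Fin m) ℂ,
      ((g : Matrix (Fin m ⊕ Fin m) (Fin m ⊕ Fin m) ℂ) * Jmat m
          * (g : Matrix (Fin m ⊕ Fin m) (Fin m ⊕ Fin m) ℂ).transpose = Jmat m) ∧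
      ∀ γ : Γ, ρ₂.1 γ = g * ρ₁.1 γ * g⁻¹ with hrE
  set rA : AugHom φΓ φU → AugHom φΓ φU → Prop := fun χ₁ χ₂ =>
    ∃ u : Matrix.unitaryGroup (Fin m ⊕ Fin m) ℂ, ∀ x : Γ ⋊[φΓ] S,
      χ₂.1 x = SemidirectProduct.inl u * χ₁.1 x * (SemidirectProduct.inl u)⁻¹ with hrA
  -- the distinguished nontrivial element of S
  obtain ⟨s₀, hs₀ne, hs₀uniq⟩ := (Nat.card_eq_two_iff' (1 : S)).mp hS
  have hdichot : ∀ s : S, s = 1 ∨ s = s₀ := fun s =>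
    or_iff_not_imp_left.mpr fun h => hs₀uniq s h
  have hs₀sq : s₀ * s₀ = 1 := by
    rcases hdichot (s₀ * s₀) with h | h
    · exact h
    · exact absurd (mul_right_cancel (h.trans (one_mul s₀).symm)) hs₀ne
  -- elements of Sp(m) are fixed by the action
  have hfixed : ∀ (s : S) (g : Matrix.unitaryGroup (Fin m ⊕ Fin m) ℂ),
      ((g : Matrix (Fin m ⊕ Fin m) (Fin m ⊕ Fin m) ℂ) * Jmat m
        * (g : Matrix (Fin m ⊕ Fin m) (Fin m ⊕ Fin m) ℂ)ᵀ = Jmat m) → φU s g = g := by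
    intro s g hsp
    rcases hdichot s with rfl | h
    · simp
    · exact Subtype.ext (by rw [h, hφU s₀ hs₀ne g]; exact sp_fixed g.2 hsp)
  -- hatFun respects the relations
  have hresp : ∀ ρ₁ ρ₂ : EquivHom φΓ φU, rE ρ₁ ρ₂ →
      rA (hatFun φΓ φU ρ₁) (hatFun φΓ φU ρ₂) := by
    rintro ρ₁ ρ₂ ⟨g, hg, hconj⟩
    refine ⟨g, fun x => ?_⟩
    rw [conj_inl_eq, hat_apply, hat_apply]
    have : φU x.right g⁻¹ = g⁻¹ := by
      rw [map_inv, hfixed x.right g hg]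
    rw [this]
    congr 1
    exact hconj x.left
  -- the induced map on quotients
  let f : Quot rE → Quot rA := Quot.map (hatFun φΓ φU) hresp
  -- equivalence of rA
  have hrAequiv : Equivalence rA := by
    constructor
    · intro χ
      exact ⟨1, fun x => by simp⟩
    · rintro χ₁ χ₂ ⟨u, hu⟩
      refine ⟨u⁻¹, fun x => ?_⟩
      rw [hu x, map_inv]
      group
    · rintro χ₁ χ₂ χ₃ ⟨u, hu⟩ ⟨w, hw⟩
      refine ⟨w * u, fun x => ?_⟩
      rw [hw x, hu x, _root_.map_mul]
      group
  -- injectivity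
  have hinj : Function.Injective f := by
    have key : ∀ ρ₁ ρ₂ : EquivHom φΓ φU,
        Quot.mk rA (hatFun φΓ φU ρ₁) = Quot.mk rA (hatFun φΓ φU ρ₂) →
        Quot.mk rE ρ₁ = Quot.mk rE ρ₂ := by
      intro ρ₁ ρ₂ h
      obtain ⟨u, hu⟩ := hrAequiv.eqvGen_iff.mp (Quot.eqvGen_exact h)
      -- from x = inr s₀ : u is in Sp(m)
      have h1 := hu (SemidirectProduct.inr s₀)
      rw [conj_inl_eq, hat_apply, hat_apply] at h1
      have h1l := congrArg SemidirectProduct.left h1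
      simp only [SemidirectProduct.left_inr, SemidirectProduct.right_inr] at h1l
      have hufix : φU s₀ u = u := by
        have h2 : u * (φU s₀ u)⁻¹ = 1 := by simpa using h1l.symm
        exact (mul_inv_eq_one.mp h2).symm
      have husp : (u : Matrix (Fin m ⊕ Fin m) (Fin m ⊕ Fin m) ℂ) * Jmat m
          * (u : Matrix (Fin m ⊕ Fin m) (Fin m ⊕ Fin m) ℂ)ᵀ = Jmat m := by
        apply sp_of_fixed u.2
        have := congrArg (Subtype.val) hufix
        rwa [hφU s₀ hs₀ne u] at this
      apply Quot.sound
      refine ⟨u, husp, fun γ => ?_⟩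
      have h2 := hu (SemidirectProduct.inl γ)
      rw [conj_inl_eq, hat_apply, hat_apply] at h2
      have h2l := congrArg SemidirectProduct.left h2
      simp only [SemidirectProduct.left_inl, SemidirectProduct.right_inl, _root_.map_one,
        MulAut.one_apply] at h2l
      exact h2l
    intro a b
    induction a using Quot.ind with | _ ρ₁ => ?_
    induction b using Quot.ind with | _ ρ₂ => ?_
    exact key ρ₁ ρ₂
  -- surjectivity
  have hsurj : Function.Surjective f := by
    intro q
    induction q using Quot.ind with | _ χ => ?_
    -- the left component of `χ (inr s₀)`
    set u₀ : Matrix.unitaryGroup (Fin m ⊕ Fin m) ℂ :=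
      (χ.1 (SemidirectProduct.inr s₀)).left with hu₀
    have hx : χ.1 (SemidirectProduct.inr s₀) = ⟨u₀, s₀⟩ := by
      ext
      · rfl
      · rw [χ.2]; rfl
    have hsq : χ.1 (SemidirectProduct.inr s₀) * χ.1 (SemidirectProduct.inr s₀) = 1 := by
      rw [← _root_.map_mul, show (SemidirectProduct.inr s₀ * SemidirectProduct.inr s₀ :
        Γ ⋊[φΓ] S) = 1 by rw [← _root_.map_mul, hs₀sq, _root_.map_one], _root_.map_one]
    have hkey : u₀ * φU s₀ u₀ = 1 := by
      rw [hx] at hsq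
      have hkl := congrArg SemidirectProduct.left hsq
      rw [SemidirectProduct.mul_left] at hkl
      exact hkl
    -- matrix-level consequences
    have hcoe := congrArg (Subtype.val) hkey
    simp only [MulMemClass.coe_mul, OneMemClass.coe_one, hφU s₀ hs₀ne u₀] at hcoe
    rw [Jmat_inv] at hcoe
    set U : Matrix (Fin m ⊕ Fin m) (Fin m ⊕ Fin m) ℂ :=
      (u₀ : Matrix (Fin m ⊕ Fin m) (Fin m ⊕ Fin m) ℂ) with hUdef
    have hUJU : U * Jmat m * U.map (starRingEnd ℂ) = Jmat m := by
      have h3 : U * (Jmat m * U.map (starRingEnd ℂ) * -(Jmat m)) * Jmat m = Jmat m := by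
        rw [hcoe, one_mul]
      calc U * Jmat m * U.map (starRingEnd ℂ)
          = U * Jmat m * U.map (starRingEnd ℂ) * -(Jmat m * Jmat m) := by
            rw [Jmat_mul_Jmat]; simp
        _ = U * (Jmat m * U.map (starRingEnd ℂ) * -(Jmat m)) * Jmat m := by noncomm_ring
        _ = Jmat m := h3
    have hAmem : U * Jmat m ∈ Matrix.unitaryGroup (Fin m ⊕ Fin m) ℂ :=
      mul_mem u₀.2 Jmat_mem
    have hJUt : Jmat m * Uᵀ = U * Jmat m := by
      have ht := congrArg Matrix.transpose hUJU
      rw [Matrix.transpose_mul, Matrix.transpose_mul, Jmat_transpose] at ht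
      -- ht : (U.map conj)ᵀ * (-J * Uᵀ) = -J
      have ht2 : star U * (Jmat m * Uᵀ) = Jmat m := by
        have h4 : (U.map (starRingEnd ℂ))ᵀ = star U := by
          ext p q
          simp [Matrix.star_eq_conjTranspose, Matrix.conjTranspose_apply]
        rw [h4] at ht
        have hneg := congrArg Neg.neg ht
        simp only [neg_neg] at hneg
        calc star U * (Jmat m * Uᵀ) = -(star U * (-(Jmat m) * Uᵀ)) := by noncomm_ring
          _ = Jmat m := hneg
      have hU2 : U * star U = 1 := u₀.2.2
      calc Jmat m * Uᵀ = (U * star U) * (Jmat m * Uᵀ) := by rw [hU2, one_mul]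
        _ = U * (star U * (Jmat m * Uᵀ)) := by noncomm_ring
        _ = U * Jmat m := by rw [ht2]
    have hAskew : (U * Jmat m)ᵀ = -(U * Jmat m) := by
      rw [Matrix.transpose_mul, Jmat_transpose, neg_mul, hJUt]
    obtain ⟨v, hv, hvJ⟩ := skew_takagi hAmem hAskew
    set w : Matrix.unitaryGroup (Fin m ⊕ Fin m) ℂ := ⟨star v, Unitary.star_mem hv⟩ with hw
    have hJnJ : Jmat m * -(Jmat m) = 1 := by rw [mul_neg, Jmat_mul_Jmat]; simp
    have key2 : w * u₀ = φU s₀ w := by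
      apply Subtype.ext
      rw [MulMemClass.coe_mul, hφU s₀ hs₀ne w]
      show star v * U = Jmat m * (star v).map (starRingEnd ℂ) * (Jmat m)⁻¹
      calc star v * U = star v * U * (Jmat m * -(Jmat m)) := by rw [hJnJ, mul_one]
        _ = (star v * (U * Jmat m)) * -(Jmat m) := by noncomm_ring
        _ = (star v * (v * Jmat m * vᵀ)) * -(Jmat m) := by rw [hvJ]
        _ = ((star v * v) * (Jmat m * vᵀ)) * -(Jmat m) := by noncomm_ring
        _ = Jmat m * vᵀ * -(Jmat m) := by rw [hv.1, one_mul]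
        _ = Jmat m * (star v).map (starRingEnd ℂ) * (Jmat m)⁻¹ := by
            rw [conj_star_eq_transpose, Jmat_inv]
    -- the conjugated homomorphism
    set ψ : (Γ ⋊[φΓ] S) →* (Matrix.unitaryGroup (Fin m ⊕ Fin m) ℂ ⋊[φU] S) :=
      ((MulAut.conj (SemidirectProduct.inl w)).toMonoidHom.comp χ.1) with hψdef
    have hψ : ∀ x, ψ x = SemidirectProduct.inl w * χ.1 x * (SemidirectProduct.inl w)⁻¹ :=
      fun x => rfl
    have hψr : ∀ x, (ψ x).right = x.right := by
      intro x
      rw [hψ, conj_inl_eq]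
      exact χ.2 x
    have hψs : ∀ s, ψ (SemidirectProduct.inr s) = SemidirectProduct.inr s := by
      intro s
      rcases hdichot s with rfl | h
      · simp only [_root_.map_one]
      · rw [h, hψ, hx, conj_inl_eq]
        have h5 : w * u₀ * (φU s₀) w⁻¹ = 1 := by
          rw [map_inv]
          exact mul_inv_eq_one.mpr key2
        show (⟨w * u₀ * (φU s₀) w⁻¹, s₀⟩ :
          Matrix.unitaryGroup (Fin m ⊕ Fin m) ℂ ⋊[φU] S) = SemidirectProduct.inr s₀
        rw [h5]
        rfl
    have hψinl : ∀ γ : Γ, ψ (SemidirectProduct.inl γ) =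
        SemidirectProduct.inl ((ψ (SemidirectProduct.inl γ)).left) := by
      intro γ
      have hr : (ψ (SemidirectProduct.inl γ)).right = 1 := by
        rw [hψr]; rfl
      conv_lhs => rw [← SemidirectProduct.inl_left_mul_inr_right (ψ (SemidirectProduct.inl γ))]
      rw [hr, _root_.map_one, mul_one]
    have hmul : ∀ a b : Γ, (ψ (SemidirectProduct.inl (a * b))).left =
        (ψ (SemidirectProduct.inl a)).left * (ψ (SemidirectProduct.inl b)).left := by
      intro a b
      have hr : (ψ (SemidirectProduct.inl a)).right = 1 := by rw [hψr]; rfl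
      calc (ψ (SemidirectProduct.inl (a * b))).left
          = (ψ (SemidirectProduct.inl a) * ψ (SemidirectProduct.inl b)).left := by
            rw [show (SemidirectProduct.inl (a * b) : Γ ⋊[φΓ] S) =
              SemidirectProduct.inl a * SemidirectProduct.inl b from _root_.map_mul _ a b,
              _root_.map_mul ψ]
        _ = (ψ (SemidirectProduct.inl a)).left *
              (φU (ψ (SemidirectProduct.inl a)).right) (ψ (SemidirectProduct.inl b)).left :=
            SemidirectProduct.mul_left _ _
        _ = (ψ (SemidirectProduct.inl a)).left * (ψ (SemidirectProduct.inl b)).left := by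
            rw [hr, _root_.map_one, MulAut.one_apply]
    let ρm : Γ →* Matrix.unitaryGroup (Fin m ⊕ Fin m) ℂ :=
      MonoidHom.mk' (fun γ => (ψ (SemidirectProduct.inl γ)).left) hmul
    have hequi : ∀ (s : S) (γ : Γ), ρm (φΓ s γ) = φU s (ρm γ) := by
      intro s γ
      have hc : ψ (SemidirectProduct.inl (φΓ s γ)) = SemidirectProduct.inl (φU s (ρm γ)) := by
        rw [SemidirectProduct.inl_aut, _root_.map_mul, _root_.map_mul, hψs s, hψs (s⁻¹),
          hψinl γ]
        rw [show ((ψ (SemidirectProduct.inl γ)).left) = ρm γ from rfl,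
          ← SemidirectProduct.inl_aut]
      exact congrArg SemidirectProduct.left hc
    set ρE : EquivHom φΓ φU := ⟨ρm, hequi⟩ with hρE
    have hhat : ∀ x, (hatFun φΓ φU ρE).1 x = ψ x := by
      intro x
      rw [hat_apply]
      conv_rhs => rw [← SemidirectProduct.inl_left_mul_inr_right x]
      rw [_root_.map_mul ψ, hψinl x.left, hψs x.right, ← SemidirectProduct.mk_eq_inl_mul_inr]
      rfl
    refine ⟨Quot.mk rE ρE, ?_⟩
    show Quot.mk rA (hatFun φΓ φU ρE) = Quot.mk rA χ
    exact (Quot.sound ⟨w, fun x => by rw [hhat x, hψ x]⟩).symm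
  exact ⟨Equiv.ofBijective f ⟨hinj, hsurj⟩, fun ρ => rfl⟩
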